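/- For the one-dimensional Gaussian mechanism M(x) = f(x) + N(0, σ²) with |f(x) − f(x')| ≤ Δ for all x, x', if σ ≥ Δ·√(2·ln(1.25/δ))/ε with ε ∈ (0,1), then M is (ε, δ)-DP. -/

import Mathlib

open MeasureTheory ProbabilityTheory Real
open scoped NNReal ENNReal

lemma gauss_symm {v : ℝ≥0} (hv : v ≠ 0) {s : Set ℝ} (hs : MeasurableSet s) :
    gaussianReal 0 v ((fun x : ℝ => -x) ⁻¹' s) = gaussianReal 0 v s := by
  have hmap := gaussianReal_map_const_mul (μ := 0) (v := v) (-1)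
  have h1 : NNReal.mk ((-1:ℝ)^2) (sq_nonneg _) = (1 : ℝ≥0) := by ext; norm_num [NNReal.mk]; rfl
  rw [h1, one_mul, mul_zero] at hmap
  have hneg : (fun x : ℝ => -x) = (fun x : ℝ => -1 * x) := by ext x; ring
  conv_rhs => rw [← hmap]
  rw [Measure.map_apply (by fun_prop) hs, hneg]

lemma gauss_half {v : ℝ≥0} (hv : v ≠ 0) : gaussianReal 0 v (Set.Ici (0:ℝ)) = 1/2 := by
  set P := gaussianReal 0 v with hP
  have hIic : P (Set.Iic (0:ℝ)) = P (Set.Ici (0:ℝ)) := by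
    have := gauss_symm hv (measurableSet_Ici (a := (0:ℝ)))
    have hpre : (fun x : ℝ => -x) ⁻¹' (Set.Ici (0:ℝ)) = Set.Iic 0 := by
      ext x; simp
    rwa [hpre] at this
  have hIio : P (Set.Iio (0:ℝ)) = P (Set.Iic (0:ℝ)) := by
    refine le_antisymm (measure_mono Set.Iio_subset_Iic_self) ?_
    calc P (Set.Iic (0:ℝ)) = P (Set.Iio 0 ∪ {0}) := by rw [Set.Iio_union_right]
      _ ≤ P (Set.Iio 0) + P {0} := measure_union_le _ _
      _ = P (Set.Iio 0) := by
          rw [gaussianReal_absolutelyContinuous 0 hv (volume_singleton), add_zero]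
  have h1 : P (Set.Ici (0:ℝ)) + P (Set.Iio 0) = 1 := by
    rw [← measure_union (by simp [Set.disjoint_left]) measurableSet_Iio]
    rw [Set.union_comm, Set.Iio_union_Ici]
    exact measure_univ
  rw [hIio, hIic] at h1
  rw [ENNReal.eq_div_iff (by norm_num) (by norm_num), two_mul]
  exact h1

lemma gauss_half_shift {v : ℝ≥0} (hv : v ≠ 0) (τ : ℝ) :
    gaussianReal τ v (Set.Ici τ) = 1/2 := by
  have hmap := gaussianReal_map_add_const (μ := 0) (v := v) τ
  rw [zero_add] at hmap
  rw [← hmap, Measure.map_apply (measurable_add_const τ) measurableSet_Ici]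
  have : (· + τ) ⁻¹' (Set.Ici τ) = Set.Ici (0:ℝ) := by
    ext z; simp
  rw [this, gauss_half hv]

lemma gauss_tail {v : ℝ≥0} (hv : v ≠ 0) {τ : ℝ} (hτ : 0 ≤ τ) :
    gaussianReal 0 v (Set.Ici τ) ≤ ENNReal.ofReal (rexp (-τ^2/(2*(v:ℝ))) / 2) := by
  have hvpos : (0:ℝ) < v := by
    have := hv
    positivity
  have key : ∀ t ∈ Set.Ici τ, gaussianPDF 0 v t
      ≤ ENNReal.ofReal (rexp (-τ^2/(2*(v:ℝ)))) * gaussianPDF τ v t := by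
    intro t ht
    simp only [Set.mem_Ici] at ht
    rw [gaussianPDF, gaussianPDF, ← ENNReal.ofReal_mul (le_of_lt (Real.exp_pos _))]
    apply ENNReal.ofReal_le_ofReal
    rw [gaussianPDFReal, gaussianPDFReal]
    have hrw : rexp (-τ^2/(2*(v:ℝ))) * ((√(2*π*(v:ℝ)))⁻¹ * rexp (-(t-τ)^2/(2*(v:ℝ))))
        = (√(2*π*(v:ℝ)))⁻¹ * rexp (-τ^2/(2*(v:ℝ)) + -(t-τ)^2/(2*(v:ℝ))) := by
      rw [Real.exp_add]; ring
    rw [hrw]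
    apply mul_le_mul_of_nonneg_left _ (by positivity)
    apply Real.exp_le_exp.mpr
    rw [← add_div]
    refine (div_le_div_iff_of_pos_right (by positivity)).mpr ?_
    nlinarith [mul_nonneg hτ (sub_nonneg.mpr ht)]
  calc gaussianReal 0 v (Set.Ici τ) = ∫⁻ t in Set.Ici τ, gaussianPDF 0 v t :=
        gaussianReal_apply 0 hv _
    _ ≤ ∫⁻ t in Set.Ici τ, ENNReal.ofReal (rexp (-τ^2/(2*(v:ℝ)))) * gaussianPDF τ v t :=
        setLIntegral_mono ((measurable_gaussianPDF τ v).const_mul _) key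
    _ = ENNReal.ofReal (rexp (-τ^2/(2*(v:ℝ)))) * ∫⁻ t in Set.Ici τ, gaussianPDF τ v t :=
        lintegral_const_mul _ (measurable_gaussianPDF τ v)
    _ = ENNReal.ofReal (rexp (-τ^2/(2*(v:ℝ)))) * gaussianReal τ v (Set.Ici τ) := by
        rw [gaussianReal_apply τ hv]
    _ = ENNReal.ofReal (rexp (-τ^2/(2*(v:ℝ)))) * ENNReal.ofReal (1/2) := by
        rw [gauss_half_shift hv τ]
        congr 1
        rw [ENNReal.ofReal_div_of_pos (by norm_num), ENNReal.ofReal_one, ENNReal.ofReal_ofNat]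
    _ = ENNReal.ofReal (rexp (-τ^2/(2*(v:ℝ))) / 2) := by
        rw [← ENNReal.ofReal_mul (le_of_lt (Real.exp_pos _))]
        congr 1
        ring


lemma exp_half_lt : rexp (1/2:ℝ) < 1649/1000 := by
  have h := Real.exp_one_lt_d9
  have h' : rexp 1 < (27183/10000:ℝ) := by norm_num at h; linarith
  have hmul : rexp (1/2:ℝ) * rexp (1/2:ℝ) = rexp 1 := by rw [← Real.exp_add]; norm_num
  nlinarith [Real.exp_pos ((1:ℝ)/2), h', hmul]

lemma aux_L_lb {L m : ℝ} (h2 : L^2 = 2*m) (hm : 1/5 < m) (hL : 0 < L) : (79/125:ℝ) ≤ L := by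
  nlinarith [h2, hm, hL]

set_option maxHeartbeats 1000000 in
/-- The one-dimensional Gaussian mechanism `M(x) = f(x) + N(0, σ²)` (whose output
distribution is `N(f(x), σ²)`), for a function `f` of sensitivity at most `Δ`, is
`(ε, δ)`-DP whenever `ε ∈ (0,1)` and `σ ≥ Δ·√(2·ln(1.25/δ))/ε`. -/
theorem gaussian_mechanism {X : Type*} (f : X → ℝ) (Δ ε δ σ : ℝ)
    (hΔ : ∀ x x' : X, |f x - f x'| ≤ Δ)
    (hε : ε ∈ Set.Ioo (0 : ℝ) 1) (hδ : 0 < δ) (hσpos : 0 < σ)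
    (hσ : Δ * Real.sqrt (2 * Real.log (1.25 / δ)) / ε ≤ σ) :
    ∀ x x' : X, ∀ S : Set ℝ, MeasurableSet S →
      gaussianReal (f x) (⟨σ ^ 2, sq_nonneg σ⟩ : ℝ≥0) S ≤
        ENNReal.ofReal (Real.exp ε) * gaussianReal (f x') (⟨σ ^ 2, sq_nonneg σ⟩ : ℝ≥0) S +
          ENNReal.ofReal δ := by
  obtain ⟨hε0, hε1⟩ := hε
  intro x x' S hS
  set v : ℝ≥0 := (⟨σ ^ 2, sq_nonneg σ⟩ : ℝ≥0) with hvdef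
  have hvr : ((v:ℝ)) = σ^2 := rfl
  have hv : v ≠ 0 := by
    intro h
    have h2 : (v:ℝ) = 0 := by rw [h]; rfl
    rw [hvr] at h2
    exact (pow_ne_zero 2 hσpos.ne') h2
  by_cases hδ1 : (1:ℝ) ≤ δ
  · exact le_trans (le_trans prob_le_one (ENNReal.one_le_ofReal.mpr hδ1)) le_add_self
  push_neg at hδ1
  set μ := f x with hμdef
  set μ' := f x' with hμ'def
  set a := μ - μ' with hadef
  have ha : |a| ≤ Δ := hΔ x x'
  clear_value v
  clear_value a
  clear_value μ μ'
  set c : ℝ := ε*σ^2 - a^2/2 with hcdef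
  clear_value c
  set B : Set ℝ := {t | c < a * (t - μ)} with hBdef
  have hB : MeasurableSet B := measurableSet_lt measurable_const (by fun_prop)
  clear_value B
  -- pointwise density bound off B
  have hpdf : ∀ t, t ∉ B → gaussianPDF μ v t ≤ ENNReal.ofReal (rexp ε) * gaussianPDF μ' v t := by
    intro t ht
    rw [hBdef] at ht
    simp only [Set.mem_setOf_eq, not_lt] at ht
    rw [gaussianPDF, gaussianPDF, ← ENNReal.ofReal_mul (le_of_lt (Real.exp_pos _))]
    apply ENNReal.ofReal_le_ofReal
    rw [gaussianPDFReal, gaussianPDFReal]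
    have hrw : rexp ε * ((√(2*π*(v:ℝ)))⁻¹ * rexp (-(t-μ')^2/(2*(v:ℝ))))
        = (√(2*π*(v:ℝ)))⁻¹ * rexp (ε + -(t-μ')^2/(2*(v:ℝ))) := by
      rw [Real.exp_add]; ring
    rw [hrw]
    apply mul_le_mul_of_nonneg_left _ (by positivity)
    apply Real.exp_le_exp.mpr
    rw [hvr]
    have he : ε + -(t-μ')^2/(2*σ^2) = (ε*(2*σ^2) + -(t-μ')^2)/(2*σ^2) := by
      field_simp
    rw [he]
    refine (div_le_div_iff_of_pos_right (by positivity)).mpr ?_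
    rw [hcdef, hadef] at ht
    have hid : ε*(2*σ^2) + -(t-μ')^2 - (-(t-μ)^2)
        = 2*((ε*σ^2 - (μ-μ')^2/2) - (μ-μ')*(t-μ)) := by ring
    linarith only [ht, hid]
  -- bad set bound
  have hbad : gaussianReal μ v B ≤ ENNReal.ofReal δ := by
    by_cases haz : a = 0
    · have hc : 0 < c := by rw [hcdef, haz]; norm_num; positivity
      have hBe : B = ∅ := by
        rw [hBdef]
        ext t
        simp only [Set.mem_setOf_eq, haz, zero_mul, Set.mem_empty_iff_false, iff_false, not_lt]
        linarith
      rw [hBe]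
      simp
    · have habs : 0 < |a| := abs_pos.mpr haz
      have hΔpos : 0 < Δ := lt_of_lt_of_le habs ha
      set m := Real.log (1.25/δ) with hmdef
      clear_value m
      have hm : (1/5:ℝ) < m := by
        have h1 : Real.log (δ/1.25) ≤ δ/1.25 - 1 := Real.log_le_sub_one_of_pos (by positivity)
        have h2 : m = - Real.log (δ/1.25) := by
          rw [hmdef, ← Real.log_inv, inv_div]
        have h4 : δ/1.25 = δ*(4/5) := by norm_num; ring
        rw [h4] at h1
        rw [h2, h4]
        linarith only [h1, hδ1]
      set L := Real.sqrt (2*m) with hLdef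
      clear_value L
      have hL2 : L^2 = 2*m := by rw [hLdef]; exact Real.sq_sqrt (by linarith)
      have hLpos : 0 < L := by rw [hLdef]; exact Real.sqrt_pos.mpr (by linarith)
      have hεσ : L*Δ ≤ ε*σ := by
        rw [div_le_iff₀ hε0] at hσ
        linarith only [hσ]
      set τ := c/|a| with hτdef
      clear_value τ
      set r := ε/(2*L) with hrdef
      clear_value r
      have hr : r*(2*L) = ε := by
        rw [hrdef]; field_simp
      have hτlb : σ*L - σ*r ≤ τ := by
        have e1 : τ = ε*σ^2/|a| - |a|/2 := by
          rw [hτdef, hcdef, ← sq_abs a]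
          field_simp
        have e2 : ε*σ^2/Δ ≤ ε*σ^2/|a| := div_le_div_of_nonneg_left (by positivity) habs ha
        have e3 : σ*L ≤ ε*σ^2/Δ := by
          rw [le_div_iff₀ hΔpos]
          linarith only [mul_le_mul_of_nonneg_left hεσ hσpos.le]
        have e4 : |a|/2 ≤ σ*r := by
          have hrr : σ*r = σ*ε/(2*L) := by rw [hrdef]; ring
          rw [hrr, div_le_div_iff₀ two_pos (by positivity)]
          linarith only [mul_le_mul_of_nonneg_right ha (by positivity : (0:ℝ) ≤ 2*L), hεσ]
        rw [e1]
        linarith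
      -- reduce to a right tail of the standard centered gaussian
      have hred : gaussianReal μ v B ≤ gaussianReal 0 v (Set.Ici τ) := by
        have hmap := gaussianReal_map_add_const (μ := 0) (v := v) μ
        rw [zero_add] at hmap
        have hBmap : gaussianReal μ v B = gaussianReal 0 v ((· + μ) ⁻¹' B) := by
          rw [← hmap, Measure.map_apply (measurable_add_const μ) hB]
        rw [hBmap]
        have hpre : ((· + μ) ⁻¹' B) = {z : ℝ | c < a * z} := by
          rw [hBdef]
          ext z
          simp
        rw [hpre]
        rcases lt_or_gt_of_ne haz with hneg | hpos
        · have hτa : -τ = c/a := by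
            rw [hτdef, abs_of_neg hneg, div_neg, neg_neg]
          have hsub : {z : ℝ | c < a*z} ⊆ Set.Iic (-τ) := by
            intro z hz
            simp only [Set.mem_setOf_eq] at hz
            simp only [Set.mem_Iic, hτa]
            exact (le_div_iff_of_neg hneg).mpr (le_of_lt (by linarith))
          refine le_trans (measure_mono hsub) ?_
          have hpre2 : (fun x : ℝ => -x) ⁻¹' (Set.Ici τ) = Set.Iic (-τ) := by
            ext z; simp [le_neg]
          rw [← hpre2, gauss_symm hv measurableSet_Ici]
        · have hsub : {z : ℝ | c < a*z} ⊆ Set.Ici τ := by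
            intro z hz
            simp only [Set.mem_setOf_eq] at hz
            simp only [Set.mem_Ici, hτdef, abs_of_pos hpos]
            exact le_of_lt ((div_lt_iff₀ hpos).mpr (by linarith))
          exact measure_mono hsub
      refine le_trans hred ?_
      -- tail bound
      by_cases hcase : ε ≤ L^2
      · -- the standard regime
        have hrL : r ≤ L/2 := by
          rw [hrdef, div_le_div_iff₀ (by positivity) two_pos]
          linarith only [hcase]
        have hge0 : (0:ℝ) ≤ σ*L - σ*r := by
          have h := mul_nonneg hσpos.le
            (show (0:ℝ) ≤ L - r by linarith only [hrL, hLpos])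
          linarith only [mul_comm σ (L - r) ▸ (by linarith only [h] : (0:ℝ) ≤ σ*(L-r)),
            mul_sub σ L r ▸ (by linarith only [h] : (0:ℝ) ≤ σ*(L-r))]
        have hτ0 : (0:ℝ) ≤ τ := le_trans hge0 hτlb
        refine le_trans (gauss_tail hv hτ0) (ENNReal.ofReal_le_ofReal ?_)
        rw [hvr]
        have hsq : (σ*L - σ*r)^2 ≤ τ^2 := pow_le_pow_left₀ hge0 hτlb 2
        have hLr : L*r = ε/2 := by linear_combination hr/2
        have e5 : σ^2*L^2 = σ^2*(2*m) := by rw [hL2]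
        have e6 : σ^2*(L*r) = σ^2*(ε/2) := by rw [hLr]
        have h1 : σ^2*(2*m - ε) ≤ τ^2 := by linarith only [hsq, e5, e6, sq_nonneg (σ*r)]
        have h2 : -τ^2/(2*σ^2) ≤ ε/2 - m := by
          rw [div_le_iff₀ (by positivity)]
          linarith only [h1]
        have hexpm : rexp (-m) = δ*(4/5) := by
          rw [hmdef, Real.exp_neg, Real.exp_log (by positivity), inv_div,
            div_eq_mul_inv]
          norm_num
        have h3 : rexp (-τ^2/(2*σ^2)) ≤ rexp (ε/2) * (δ*(4/5)) := by
          calc rexp (-τ^2/(2*σ^2)) ≤ rexp (ε/2 - m) := Real.exp_le_exp.mpr h2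
            _ = rexp (ε/2) * rexp (-m) := by rw [← Real.exp_add]; ring_nf
            _ = rexp (ε/2) * (δ*(4/5)) := by rw [hexpm]
        have h4 : rexp (ε/2) < (5/2:ℝ) := by
          have hh : rexp (ε/2) ≤ rexp (1/2) := Real.exp_le_exp.mpr (by linarith only [hε1])
          linarith only [hh, exp_half_lt]
        have h5 : rexp (ε/2) * (δ*(4/5)) ≤ (5/2) * (δ*(4/5)) :=
          mul_le_mul_of_nonneg_right h4.le (by positivity)
        linarith only [h3, h5]
      · push_neg at hcase
        have hδlb : (7/10:ℝ) ≤ δ := by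
          have h5 : m < 1/2 := by linarith only [hL2, hcase, hε1]
          have hlog : 1.25/δ = rexp m := by
            rw [hmdef]; exact (Real.exp_log (by positivity)).symm
          have h7 : rexp (1/2:ℝ) < (1649/1000:ℝ) := exp_half_lt
          have h6 : rexp m < rexp (1/2) := Real.exp_lt_exp.mpr h5
          have h8 : 1.25/δ < (1649/1000:ℝ) := by rw [hlog]; linarith
          rw [div_lt_iff₀ hδ] at h8
          norm_num at h8
          linarith only [h8]
        have hLlb : (79/125:ℝ) ≤ L := aux_L_lb hL2 hm hLpos
        have hr16 : r ≤ (99/125:ℝ) := by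
          rw [hrdef, div_le_iff₀ (by positivity)]
          linarith only [hLlb, hε1]
        have hτlb2 : -((4/25)*σ) ≤ τ := by
          have hx : (0:ℝ) ≤ σ*((4/25) - r + L) :=
            mul_nonneg hσpos.le (by linarith)
          have hx2 : σ*((4/25) - r + L) = (4/25)*σ - σ*r + σ*L := by ring
          rw [hx2] at hx
          linarith only [hτlb, hx]
        have hsplit : Set.Ici τ ⊆ Set.Ico (-((4/25)*σ)) 0 ∪ Set.Ici 0 := by
          intro z hz
          simp only [Set.mem_Ici] at hz
          by_cases h0 : (0:ℝ) ≤ z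
          · exact Or.inr h0
          · exact Or.inl ⟨le_trans hτlb2 hz, lt_of_not_ge h0⟩
        refine le_trans (measure_mono hsplit) (le_trans (measure_union_le _ _) ?_)
        have hsqrt : √(2*π*(v:ℝ)) = √(2*π)*σ := by
          rw [hvr, Real.sqrt_mul (by positivity), Real.sqrt_sq hσpos.le]
        have hM : ∀ t ∈ Set.Ico (-((4/25)*σ)) 0,
            gaussianPDF 0 v t ≤ ENNReal.ofReal ((√(2*π)*σ)⁻¹) := by
          intro t _
          rw [gaussianPDF]
          apply ENNReal.ofReal_le_ofReal
          rw [gaussianPDFReal, hsqrt]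
          calc (√(2*π)*σ)⁻¹ * rexp (-(t-0)^2/(2*(v:ℝ)))
              ≤ (√(2*π)*σ)⁻¹ * 1 := by
                apply mul_le_mul_of_nonneg_left _ (by positivity)
                rw [← Real.exp_zero]
                apply Real.exp_le_exp.mpr
                rw [hvr]
                have hp : (0:ℝ) < 2*σ^2 := by positivity
                apply div_nonpos_of_nonpos_of_nonneg (neg_nonpos.mpr (sq_nonneg _)) hp.le
            _ = (√(2*π)*σ)⁻¹ := mul_one _
        have hIco : gaussianReal 0 v (Set.Ico (-((4/25)*σ)) 0) ≤ ENNReal.ofReal (8/125) := by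
          have hπ : (5/2:ℝ) ≤ √(2*π) := by
            have hπ2 : (25/8:ℝ) < π := by
              have h := Real.pi_gt_d6
              norm_num at h
              linarith
            rw [show (5/2:ℝ) = √((5/2)^2) from (Real.sqrt_sq (by norm_num)).symm]
            exact Real.sqrt_le_sqrt (by norm_num; linarith only [hπ2])
          calc gaussianReal 0 v (Set.Ico (-((4/25)*σ)) 0)
              = ∫⁻ t in Set.Ico (-((4/25)*σ)) 0, gaussianPDF 0 v t := gaussianReal_apply 0 hv _
            _ ≤ ∫⁻ _ in Set.Ico (-((4/25)*σ)) 0, ENNReal.ofReal ((√(2*π)*σ)⁻¹) :=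
                setLIntegral_mono measurable_const hM
            _ = ENNReal.ofReal ((√(2*π)*σ)⁻¹) * volume (Set.Ico (-((4/25)*σ)) 0) := by
                rw [setLIntegral_const]
            _ = ENNReal.ofReal ((√(2*π)*σ)⁻¹) * ENNReal.ofReal ((4/25)*σ) := by
                rw [Real.volume_Ico]
                congr 1
                ring
            _ = ENNReal.ofReal ((√(2*π)*σ)⁻¹ * ((4/25)*σ)) := by
                rw [← ENNReal.ofReal_mul (by positivity)]
            _ ≤ ENNReal.ofReal (8/125) := by
                apply ENNReal.ofReal_le_ofReal
                rw [inv_mul_eq_div, div_le_iff₀ (by positivity)]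
                linarith only [mul_le_mul_of_nonneg_right hπ hσpos.le]
        calc gaussianReal 0 v (Set.Ico (-((4/25)*σ)) 0) + gaussianReal 0 v (Set.Ici 0)
            ≤ ENNReal.ofReal (8/125) + ENNReal.ofReal (1/2) := by
              apply add_le_add hIco
              rw [gauss_half hv]
              rw [ENNReal.ofReal_div_of_pos (by norm_num), ENNReal.ofReal_one,
                ENNReal.ofReal_ofNat]
          _ = ENNReal.ofReal (8/125 + 1/2) := by
              rw [ENNReal.ofReal_add (by norm_num) (by norm_num)]
          _ ≤ ENNReal.ofReal δ := ENNReal.ofReal_le_ofReal (by linarith)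
  -- assemble
  have hdecomp : gaussianReal μ v S = gaussianReal μ v (S ∩ B) + gaussianReal μ v (S \ B) :=
    (measure_inter_add_diff S hB).symm
  have hgood : gaussianReal μ v (S \ B) ≤ ENNReal.ofReal (rexp ε) * gaussianReal μ' v S := by
    calc gaussianReal μ v (S \ B) = ∫⁻ t in S \ B, gaussianPDF μ v t := gaussianReal_apply μ hv _
      _ ≤ ∫⁻ t in S \ B, ENNReal.ofReal (rexp ε) * gaussianPDF μ' v t :=
          setLIntegral_mono ((measurable_gaussianPDF μ' v).const_mul _)
            (fun t ht => hpdf t ht.2)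
      _ = ENNReal.ofReal (rexp ε) * ∫⁻ t in S \ B, gaussianPDF μ' v t :=
          lintegral_const_mul _ (measurable_gaussianPDF μ' v)
      _ = ENNReal.ofReal (rexp ε) * gaussianReal μ' v (S \ B) := by
          rw [gaussianReal_apply μ' hv]
      _ ≤ ENNReal.ofReal (rexp ε) * gaussianReal μ' v S :=
          mul_le_mul_right (measure_mono Set.diff_subset) _
  rw [hdecomp, add_comm]
  exact add_le_add hgood (le_trans (measure_mono Set.inter_subset_right) hbad)
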